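/- Suppose prox-EB holds with parameters μ, δ, σ₀ > 0. Then the solution-set map T is Lipschitz continuous in Hausdorff distance jointly in (x,σ): there is a universal constant C > 0 (independent of all problem data) such that for all x₁, x₂ ∈ X and all σ₁, σ₂ ∈ [0, min(σ₀, δ/C_f)], dist(T(x₁,σ₁), T(x₂,σ₂)) ≤ (C/μ)·(l_{g,1} ‖x₁ − x₂‖ + l_{f,0} |σ₁ − σ₂|). In particular, T(·,σ) is (C l_{g,1}/μ)-Lipschitz in x and T(x,·) is (C l_{f,0}/μ)-Lipschitz in σ on this range. -/

import Mathlib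

open Set Metric

section AuxLemmas

/-- Variational inequality at a minimizer of a differentiable function over a convex set. -/
lemma vi_aux {F : Type*} [NormedAddCommGroup F] [NormedSpace ℝ F]
    {φ : F → ℝ} {D : F →L[ℝ] ℝ} {Y : Set F} (hY : Convex ℝ Y)
    {y : F} (hy : y ∈ Y) (hD : HasFDerivAt φ D y)
    (hmin : ∀ z ∈ Y, φ y ≤ φ z) {z : F} (hz : z ∈ Y) : 0 ≤ D (z - y) := by
  set v := z - y with hv
  have hline : HasDerivAt (fun t : ℝ => φ (y + t • v)) (D v) 0 := by
    have h1 : HasDerivAt (fun t : ℝ => y + t • v) v 0 := by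
      simpa using ((hasDerivAt_id (0:ℝ)).smul_const v).const_add y
    have hD' : HasFDerivAt φ D (y + (0:ℝ) • v) := by simpa using hD
    exact hD'.comp_hasDerivAt (x := (0:ℝ)) h1
  have hmem : ∀ t : ℝ, t ∈ Icc (0:ℝ) 1 → y + t • v ∈ Y := by
    intro t ht
    have := hY hy hz (by linarith [ht.1, ht.2] : (0:ℝ) ≤ 1 - t) ht.1 (by ring)
    convert this using 1
    rw [hv]; module
  have hslope : Filter.Tendsto (slope (fun t : ℝ => φ (y + t • v)) 0) (nhdsWithin 0 (Ioi 0))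
      (nhds (D v)) := (hasDerivAt_iff_tendsto_slope.mp hline).mono_left
    (nhdsWithin_mono _ (fun t ht => ne_of_gt ht))
  refine ge_of_tendsto hslope ?_
  filter_upwards [Ioc_mem_nhdsGT_of_mem (by constructor <;> norm_num : (0:ℝ) ∈ Ico (0:ℝ) 1)]
    with t ht
  have h01 : t ∈ Icc (0:ℝ) 1 := ⟨le_of_lt ht.1, ht.2⟩
  have hle : φ y ≤ φ (y + t • v) := hmin _ (hmem t h01)
  rw [slope_def_field]
  have h00 : φ (y + (0:ℝ) • v) = φ y := by norm_num
  rw [h00, sub_zero]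
  exact div_nonneg (by linarith) ht.1.le

/-- Derivative of `z ↦ ‖z - y‖² / 2`. -/
lemma quad_deriv {F : Type*} [NormedAddCommGroup F] [InnerProductSpace ℝ F] (y z : F) :
    HasFDerivAt (fun w => ‖w - y‖ ^ 2 / 2) (innerSL ℝ (z - y)) z := by
  have h1 : HasFDerivAt (fun w : F => w - y) (ContinuousLinearMap.id ℝ F) z :=
    (hasFDerivAt_id z).sub_const y
  have h3 := h1.norm_sq.const_mul (1/2 : ℝ)
  have hfun : (fun w : F => (1/2:ℝ) * ‖w - y‖^2) = (fun w : F => ‖w - y‖^2/2) := by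
    funext w; ring
  rw [hfun] at h3
  refine h3.congr_fderiv ?_
  ext v
  simp [real_inner_comm]

lemma partial_hasFDerivAt {E F : Type*} [NormedAddCommGroup E] [NormedSpace ℝ E]
    [NormedAddCommGroup F] [NormedSpace ℝ F] {φ : E × F → ℝ}
    (hφ : Differentiable ℝ φ) (x : E) (z : F) :
    HasFDerivAt (fun w => φ (x, w))
      ((fderiv ℝ φ (x, z)).comp (ContinuousLinearMap.inr ℝ E F)) z :=
  (hφ (x, z)).hasFDerivAt.comp z (hasFDerivAt_prodMk_right x z)

lemma comp_inr_norm_le {E F : Type*} [NormedAddCommGroup E] [NormedSpace ℝ E]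
    [NormedAddCommGroup F] [NormedSpace ℝ F] (D : E × F →L[ℝ] ℝ) :
    ‖D.comp (ContinuousLinearMap.inr ℝ E F)‖ ≤ ‖D‖ := by
  refine ContinuousLinearMap.opNorm_le_bound _ (norm_nonneg D) fun v => ?_
  have h1 : ‖((0:E), v)‖ = ‖v‖ := by
    simp [Prod.norm_def]
  calc ‖(D.comp (ContinuousLinearMap.inr ℝ E F)) v‖ = ‖D ((0:E), v)‖ := by
        simp
    _ ≤ ‖D‖ * ‖((0:E), v)‖ := D.le_opNorm _
    _ = ‖D‖ * ‖v‖ := by rw [h1]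

/-- Key residual bound: distance from a minimizer of `h₁` to the prox point of `h₂`. -/
lemma key_residual {V : Type*} [NormedAddCommGroup V] [InnerProductSpace ℝ V]
    {Y : Set V} (hYconv : Convex ℝ Y)
    {h₁ h₂ : V → ℝ} {D₁ D₂ : V → (V →L[ℝ] ℝ)}
    (hD₁ : ∀ z, HasFDerivAt h₁ (D₁ z) z) (hD₂ : ∀ z, HasFDerivAt h₂ (D₂ z) z)
    {lg1 ρ K : ℝ} (hρpos : 0 < ρ) (hρlg : ρ * lg1 ≤ 1/8) (hK : 0 ≤ K)
    {y z' : V} (hy : y ∈ Y) (hz' : z' ∈ Y)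
    (hL₂ : ‖D₂ y - D₂ z'‖ ≤ 2 * lg1 * ‖y - z'‖)
    (hcross : ‖D₂ y - D₁ y‖ ≤ K)
    (hymin : ∀ z ∈ Y, h₁ y ≤ h₁ z)
    (hz'min : ∀ z ∈ Y, ρ * h₂ z' + ‖z' - y‖^2/2 ≤ ρ * h₂ z + ‖z - y‖^2/2) :
    ρ⁻¹ * ‖y - z'‖ ≤ (4/3) * K := by
  set Δ := y - z' with hΔdef
  have hVI1 : 0 ≤ (D₁ y) (z' - y) := vi_aux hYconv hy (hD₁ y) hymin hz'
  have hΦ₂ : HasFDerivAt (fun z => ρ * h₂ z + ‖z - y‖^2/2)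
      (ρ • D₂ z' + innerSL ℝ (z' - y)) z' := ((hD₂ z').const_mul ρ).add (quad_deriv y z')
  have hVI2 : 0 ≤ (ρ • D₂ z' + innerSL ℝ (z' - y)) (y - z') :=
    vi_aux hYconv hz' hΦ₂ hz'min hy
  have hVI2' : ‖Δ‖^2 ≤ ρ * (D₂ z') Δ := by
    have h1 : (ρ • D₂ z' + innerSL ℝ (z' - y)) (y - z')
        = ρ * (D₂ z') Δ + (inner ℝ (z' - y) (y - z') : ℝ) := by
      simp [hΔdef, inner_sub_left]
    have harg : z' - y = -Δ := by rw [hΔdef]; abel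
    have h2 : (inner ℝ (z' - y) (y - z') : ℝ) = -‖Δ‖^2 := by
      rw [harg, show y - z' = Δ from hΔdef.symm, inner_neg_left, real_inner_self_eq_norm_sq]
    rw [h1, h2] at hVI2; linarith
  have hopp : ∀ (A : V →L[ℝ] ℝ) (v : V), |A v| ≤ ‖A‖ * ‖v‖ := by
    intro A v; rw [← Real.norm_eq_abs]; exact A.le_opNorm v
  have hb1 : (D₂ z') Δ ≤ (D₂ y) Δ + 2*lg1*‖Δ‖^2 := by
    have h1 : (D₂ y) Δ - (D₂ z') Δ = (D₂ y - D₂ z') Δ := by simp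
    have h2 := abs_le.mp (hopp (D₂ y - D₂ z') Δ)
    nlinarith [norm_nonneg Δ, h2.1, h2.2, hL₂]
  have hb2 : (D₂ y) Δ ≤ (D₁ y) Δ + K*‖Δ‖ := by
    have h1 : (D₂ y) Δ - (D₁ y) Δ = (D₂ y - D₁ y) Δ := by simp
    have h2 := abs_le.mp (hopp (D₂ y - D₁ y) Δ)
    nlinarith [norm_nonneg Δ, h2.1, h2.2, hcross]
  have hb3 : (D₁ y) Δ ≤ 0 := by
    have harg : z' - y = -Δ := by rw [hΔdef]; abel
    rw [harg, map_neg] at hVI1; linarith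
  have hmain : ‖Δ‖^2 ≤ ρ*K*‖Δ‖ + 2*ρ*lg1*‖Δ‖^2 := by nlinarith [hρpos]
  rcases eq_or_lt_of_le (norm_nonneg Δ) with h0 | h0
  · rw [show ‖y - z'‖ = ‖Δ‖ from rfl, ← h0]
    simp
    positivity
  · have h5 : ‖Δ‖ ≤ (4/3)*(ρ*K) := by nlinarith [hρlg, h0, sq_nonneg ‖Δ‖]
    have h6 : ρ⁻¹ * ‖Δ‖ ≤ ρ⁻¹ * ((4/3)*(ρ*K)) :=
      mul_le_mul_of_nonneg_left h5 (inv_nonneg.mpr hρpos.le)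
    calc ρ⁻¹ * ‖y - z'‖ = ρ⁻¹ * ‖Δ‖ := rfl
      _ ≤ ρ⁻¹ * ((4/3)*(ρ*K)) := h6
      _ = (4/3)*K := by field_simp

lemma hausdorff_chain {α : Type*} [MetricSpace α] {S : ℕ → Set α} {c : ℝ}
    (hne : ∀ i, (S i).Nonempty) (hbdd : ∀ i, Bornology.IsBounded (S i))
    (hstep : ∀ i, hausdorffDist (S i) (S (i+1)) ≤ c) :
    ∀ k, hausdorffDist (S 0) (S k) ≤ k * c := by
  intro k
  induction k with
  | zero => simp [Metric.hausdorffDist_self_zero]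
  | succ n ih =>
    have hfin : EMetric.hausdorffEdist (S 0) (S n) ≠ ⊤ :=
      hausdorffEdist_ne_top_of_nonempty_of_bounded (hne 0) (hne n) (hbdd 0) (hbdd n)
    calc hausdorffDist (S 0) (S (n+1))
        ≤ hausdorffDist (S 0) (S n) + hausdorffDist (S n) (S (n+1)) :=
          hausdorffDist_triangle hfin
      _ ≤ n*c + c := add_le_add ih (hstep n)
      _ = ((n:ℝ)+1)*c := by ring
      _ = ((n+1 : ℕ):ℝ)*c := by push_cast; ring

end AuxLemmas
set_option maxHeartbeats 1000000

/-- Under prox-EB with parameters `μ, δ, σ₀ > 0`, the solution-set map `T`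
is jointly Lipschitz in Hausdorff distance: there is a universal constant `C > 0` such that
for all `x₁, x₂ ∈ X` and all `σ₁, σ₂ ∈ [0, min(σ₀, δ/C_f)]`,
`dist(T(x₁,σ₁), T(x₂,σ₂)) ≤ (C/μ)(l_{g,1}‖x₁−x₂‖ + l_{f,0}|σ₁−σ₂|)`. -/
theorem stmt8 :
    ∃ C : ℝ, 0 < C ∧
    ∀ (dx dy : ℕ)
      (X : Set (EuclideanSpace ℝ (Fin dx)))
      (Y : Set (EuclideanSpace ℝ (Fin dy)))
      (f g : EuclideanSpace ℝ (Fin dx) → EuclideanSpace ℝ (Fin dy) → ℝ)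
      (lf0 lf1 lg1 Cf μ δ σ₀ ρ : ℝ)
      (prox : EuclideanSpace ℝ (Fin dx) → ℝ → EuclideanSpace ℝ (Fin dy) →
        EuclideanSpace ℝ (Fin dy))
      (T : EuclideanSpace ℝ (Fin dx) → ℝ → Set (EuclideanSpace ℝ (Fin dy)))
      (hXne : X.Nonempty) (hXclosed : IsClosed X) (hXconv : Convex ℝ X)
      (hYne : Y.Nonempty) (hYclosed : IsClosed Y) (hYconv : Convex ℝ Y)
      (hYbdd : Bornology.IsBounded Y)
      (hfC2 : ContDiff ℝ 2 (Function.uncurry f))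
      (hgC2 : ContDiff ℝ 2 (Function.uncurry g))
      (hLipf : ∀ p q : EuclideanSpace ℝ (Fin dx) × EuclideanSpace ℝ (Fin dy),
        ‖fderiv ℝ (Function.uncurry f) p - fderiv ℝ (Function.uncurry f) q‖ ≤ lf1 * ‖p - q‖)
      (hLipg : ∀ p q : EuclideanSpace ℝ (Fin dx) × EuclideanSpace ℝ (Fin dy),
        ‖fderiv ℝ (Function.uncurry g) p - fderiv ℝ (Function.uncurry g) q‖ ≤ lg1 * ‖p - q‖)
      (hlf0 : ∀ x ∈ X, ∀ y ∈ Y, ‖gradient (fun y' => f x y') y‖ ≤ lf0)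
      -- `C_f` is the supremum of `|f|` over `X × Y`
      (hCf : IsLUB ((fun p : EuclideanSpace ℝ (Fin dx) × EuclideanSpace ℝ (Fin dy) =>
        |f p.1 p.2|) '' (X ×ˢ Y)) Cf)
      (hμ : 0 < μ) (hδ : 0 < δ) (hσ₀ : 0 < σ₀)
      (hρpos : 0 < ρ) (hρ : ρ ≤ 1 / (8 * lg1)) (hσ₀l : σ₀ * lf1 ≤ lg1)
      -- `prox x σ y` is the unique minimizer over `z ∈ Y` of `ρ h_σ(x,z) + ‖z − y‖²/2`
      (hprox : ∀ x (σ : ℝ), σ ∈ Icc 0 σ₀ → ∀ y, prox x σ y ∈ Y ∧ ∀ z ∈ Y,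
        ρ * (σ * f x (prox x σ y) + g x (prox x σ y)) + ‖prox x σ y - y‖ ^ 2 / 2
          ≤ ρ * (σ * f x z + g x z) + ‖z - y‖ ^ 2 / 2)
      -- the lower-level solution set `T(x,σ)`
      (hT : ∀ x σ, T x σ = {y ∈ Y | ∀ z ∈ Y, σ * f x y + g x y ≤ σ * f x z + g x z})
      -- prox-EB
      (hEB : ∀ x ∈ X, ∀ σ ∈ Icc (0:ℝ) σ₀, ∀ y ∈ Y,
        ρ⁻¹ * ‖y - prox x σ y‖ ≤ δ →
          μ * infDist y (T x σ) ≤ ρ⁻¹ * ‖y - prox x σ y‖),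
      ∀ x₁ ∈ X, ∀ x₂ ∈ X, ∀ σ₁ ∈ Icc (0:ℝ) (min σ₀ (δ / Cf)), ∀ σ₂ ∈ Icc (0:ℝ) (min σ₀ (δ / Cf)),
        hausdorffDist (T x₁ σ₁) (T x₂ σ₂) ≤ (C / μ) * (lg1 * ‖x₁ - x₂‖ + lf0 * |σ₁ - σ₂|) := by
  refine ⟨3, by norm_num, ?_⟩
  intro dx dy X Y f g lf0 lf1 lg1 Cf μ δ σ₀ ρ prox T hXne hXclosed hXconv hYne hYclosed hYconv
    hYbdd hfC2 hgC2 hLipf hLipg hlf0 hCf hμ hδ hσ₀ hρpos hρ hσ₀l hprox hT hEB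
    x₁ hx₁ x₂ hx₂ σ₁ hσ₁ σ₂ hσ₂
  -- basic positivity facts
  have hlg1 : 0 < lg1 := by
    by_contra h
    push_neg at h
    have h8 : 8 * lg1 ≤ 0 := by linarith
    have : (1:ℝ) / (8 * lg1) ≤ 0 := by
      rcases eq_or_lt_of_le h8 with h' | h'
      · rw [h']; simp
      · exact le_of_lt (div_neg_of_pos_of_neg one_pos h')
    linarith
  obtain ⟨x₀, hx₀⟩ := hXne
  obtain ⟨y₀, hy₀⟩ := hYne
  have hlf0nn : 0 ≤ lf0 := le_trans (norm_nonneg _) (hlf0 x₀ hx₀ y₀ hy₀)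
  have hρlg : ρ * lg1 ≤ 1/8 := by
    have h8 : 0 < 8 * lg1 := by linarith
    calc ρ * lg1 ≤ (1 / (8 * lg1)) * lg1 :=
          mul_le_mul_of_nonneg_right hρ (le_of_lt hlg1)
      _ = 1/8 := by field_simp
  have hσlf1 : ∀ σ ∈ Icc (0:ℝ) σ₀, σ * lf1 ≤ lg1 := by
    intro σ hσ
    rcases le_or_gt 0 lf1 with h | h
    · nlinarith [hσ.1, hσ.2]
    · nlinarith [hσ.1]
  -- partial derivatives in the second variable
  have hfd : Differentiable ℝ (Function.uncurry f) := hfC2.differentiable (by norm_num)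
  have hgd : Differentiable ℝ (Function.uncurry g) := hgC2.differentiable (by norm_num)
  obtain ⟨Df, hDf, hDfL⟩ :
      ∃ Df : EuclideanSpace ℝ (Fin dx) → EuclideanSpace ℝ (Fin dy) →
        (EuclideanSpace ℝ (Fin dy) →L[ℝ] ℝ),
      (∀ x z, HasFDerivAt (fun w => f x w) (Df x z) z) ∧
      (∀ x x' z z', ‖Df x z - Df x' z'‖ ≤ lf1 * max ‖x - x'‖ ‖z - z'‖) := by
    refine ⟨fun x z => (fderiv ℝ (Function.uncurry f) (x, z)).comp (ContinuousLinearMap.inr ℝ _ _),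
      fun x z => partial_hasFDerivAt hfd x z, fun x x' z z' => ?_⟩
    have h2 : ‖(fderiv ℝ (Function.uncurry f) (x, z)).comp (ContinuousLinearMap.inr ℝ _ _) -
        (fderiv ℝ (Function.uncurry f) (x', z')).comp (ContinuousLinearMap.inr ℝ _ _)‖ ≤
        ‖fderiv ℝ (Function.uncurry f) (x, z) - fderiv ℝ (Function.uncurry f) (x', z')‖ := by
      rw [← ContinuousLinearMap.sub_comp]
      exact comp_inr_norm_le _
    have h3 := hLipf (x, z) (x', z')
    have h4 : ‖((x, z) : EuclideanSpace ℝ (Fin dx) × EuclideanSpace ℝ (Fin dy)) - (x', z')‖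
        = max ‖x - x'‖ ‖z - z'‖ := by
      rw [Prod.mk_sub_mk, Prod.norm_def]
    rw [h4] at h3
    exact le_trans h2 h3
  obtain ⟨Dg, hDg, hDgL⟩ :
      ∃ Dg : EuclideanSpace ℝ (Fin dx) → EuclideanSpace ℝ (Fin dy) →
        (EuclideanSpace ℝ (Fin dy) →L[ℝ] ℝ),
      (∀ x z, HasFDerivAt (fun w => g x w) (Dg x z) z) ∧
      (∀ x x' z z', ‖Dg x z - Dg x' z'‖ ≤ lg1 * max ‖x - x'‖ ‖z - z'‖) := by
    refine ⟨fun x z => (fderiv ℝ (Function.uncurry g) (x, z)).comp (ContinuousLinearMap.inr ℝ _ _),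
      fun x z => partial_hasFDerivAt hgd x z, fun x x' z z' => ?_⟩
    have h2 : ‖(fderiv ℝ (Function.uncurry g) (x, z)).comp (ContinuousLinearMap.inr ℝ _ _) -
        (fderiv ℝ (Function.uncurry g) (x', z')).comp (ContinuousLinearMap.inr ℝ _ _)‖ ≤
        ‖fderiv ℝ (Function.uncurry g) (x, z) - fderiv ℝ (Function.uncurry g) (x', z')‖ := by
      rw [← ContinuousLinearMap.sub_comp]
      exact comp_inr_norm_le _
    have h3 := hLipg (x, z) (x', z')
    have h4 : ‖((x, z) : EuclideanSpace ℝ (Fin dx) × EuclideanSpace ℝ (Fin dy)) - (x', z')‖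
        = max ‖x - x'‖ ‖z - z'‖ := by
      rw [Prod.mk_sub_mk, Prod.norm_def]
    rw [h4] at h3
    exact le_trans h2 h3
  -- bound on ‖Df‖ over X × Y
  have hDf0 : ∀ x ∈ X, ∀ y ∈ Y, ‖Df x y‖ ≤ lf0 := by
    intro x hx y hy
    have h1 : fderiv ℝ (fun y' => f x y') y = Df x y := (hDf x y).fderiv
    have h2 : ‖gradient (fun y' => f x y') y‖ = ‖Df x y‖ := by
      rw [gradient, h1]
      exact LinearIsometryEquiv.norm_map _ _
    rw [← h2]; exact hlf0 x hx y hy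
  -- membership in T
  have hTmem : ∀ x σ y, y ∈ T x σ →
      y ∈ Y ∧ ∀ z ∈ Y, σ * f x y + g x y ≤ σ * f x z + g x z := by
    intro x σ y hy; rw [hT] at hy; exact hy
  have hTsub : ∀ x σ, T x σ ⊆ Y := fun x σ y hy => (hTmem x σ y hy).1
  -- key residual bound
  have key : ∀ x ∈ X, ∀ (x' : EuclideanSpace ℝ (Fin dx)),
      ∀ σ ∈ Icc (0:ℝ) σ₀, ∀ σ' ∈ Icc (0:ℝ) σ₀, ∀ y ∈ T x σ,
      ρ⁻¹ * ‖y - prox x' σ' y‖ ≤ (4/3) * (2*lg1*‖x - x'‖ + lf0*|σ - σ'|) := by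
    intro x hx x' σ hσ σ' hσ' y hyT
    obtain ⟨hyY, hymin⟩ := hTmem x σ y hyT
    obtain ⟨hz'Y, hz'min⟩ := hprox x' σ' hσ' y
    have hKnn : 0 ≤ 2*lg1*‖x - x'‖ + lf0*|σ - σ'| := by positivity
    refine key_residual hYconv
      (D₁ := fun z => σ • Df x z + Dg x z) (D₂ := fun z => σ' • Df x' z + Dg x' z)
      (fun z => ((hDf x z).const_mul σ).add (hDg x z))
      (fun z => ((hDf x' z).const_mul σ').add (hDg x' z))
      hρpos hρlg hKnn hyY hz'Y ?_ ?_ hymin (fun z hz => hz'min z hz)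
    · -- Lipschitz bound in z at fixed (x', σ')
      set z' := prox x' σ' y
      have hsplit : σ' • Df x' y + Dg x' y - (σ' • Df x' z' + Dg x' z')
          = σ' • (Df x' y - Df x' z') + (Dg x' y - Dg x' z') := by module
      rw [hsplit]
      have hn1 : ‖σ' • (Df x' y - Df x' z')‖ ≤ σ' * (lf1 * ‖y - z'‖) := by
        rw [norm_smul σ' (Df x' y - Df x' z'), Real.norm_eq_abs, abs_of_nonneg hσ'.1]
        refine mul_le_mul_of_nonneg_left ?_ hσ'.1
        have := hDfL x' x' y z'
        simpa using this
      have hn2 : ‖Dg x' y - Dg x' z'‖ ≤ lg1 * ‖y - z'‖ := by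
        have := hDgL x' x' y z'
        simpa using this
      have hσ'lf1 : σ' * lf1 ≤ lg1 := hσlf1 σ' hσ'
      calc ‖σ' • (Df x' y - Df x' z') + (Dg x' y - Dg x' z')‖
          ≤ ‖σ' • (Df x' y - Df x' z')‖ + ‖Dg x' y - Dg x' z'‖ := norm_add_le _ _
        _ ≤ σ' * (lf1 * ‖y - z'‖) + lg1 * ‖y - z'‖ := add_le_add hn1 hn2
        _ ≤ 2 * lg1 * ‖y - z'‖ := by nlinarith [norm_nonneg (y - z')]
    · -- cross bound at the point y
      have hsplit : σ' • Df x' y + Dg x' y - (σ • Df x y + Dg x y)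
          = σ' • (Df x' y - Df x y) + (σ' - σ) • Df x y + (Dg x' y - Dg x y) := by module
      rw [hsplit]
      have hn1 : ‖σ' • (Df x' y - Df x y)‖ ≤ σ' * (lf1 * ‖x' - x‖) := by
        rw [norm_smul σ' (Df x' y - Df x y), Real.norm_eq_abs, abs_of_nonneg hσ'.1]
        refine mul_le_mul_of_nonneg_left ?_ hσ'.1
        have := hDfL x' x y y
        simpa using this
      have hn2 : ‖(σ' - σ) • Df x y‖ ≤ |σ' - σ| * lf0 := by
        rw [norm_smul (σ' - σ) (Df x y), Real.norm_eq_abs]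
        exact mul_le_mul_of_nonneg_left (hDf0 x hx y hyY) (abs_nonneg _)
      have hn3 : ‖Dg x' y - Dg x y‖ ≤ lg1 * ‖x' - x‖ := by
        have := hDgL x' x y y
        simpa using this
      have hσ'lf1 : σ' * lf1 ≤ lg1 := hσlf1 σ' hσ'
      have hrev1 : ‖x' - x‖ = ‖x - x'‖ := norm_sub_rev _ _
      have hrev2 : |σ' - σ| = |σ - σ'| := abs_sub_comm _ _
      rw [hrev1] at hn1 hn3
      rw [hrev2] at hn2
      have htri := norm_add₃_le (a := σ' • (Df x' y - Df x y)) (b := (σ' - σ) • Df x y)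
        (c := Dg x' y - Dg x y)
      have hmul : σ' * (lf1 * ‖x - x'‖) ≤ lg1 * ‖x - x'‖ := by
        nlinarith [norm_nonneg (x - x')]
      nlinarith [norm_nonneg (x - x'), abs_nonneg (σ - σ')]
  -- T is nonempty
  have hYcomp : IsCompact Y := Metric.isCompact_of_isClosed_isBounded hYclosed hYbdd
  have hTne : ∀ x σ, (T x σ).Nonempty := by
    intro x σ
    have hdiff : Differentiable ℝ (fun z => σ * f x z + g x z) := fun z =>
      (((hDf x z).const_mul σ).add (hDg x z)).differentiableAt
    obtain ⟨y, hyY, hymin⟩ := hYcomp.exists_isMinOn ⟨y₀, hy₀⟩ hdiff.continuous.continuousOn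
    refine ⟨y, ?_⟩
    rw [hT]
    exact ⟨hyY, fun z hz => hymin hz⟩
  -- per-pair step bound
  have hstep : ∀ x ∈ X, ∀ x' ∈ X, ∀ σ ∈ Icc (0:ℝ) σ₀, ∀ σ' ∈ Icc (0:ℝ) σ₀, ∀ c : ℝ,
      (4/3) * (2*lg1*‖x - x'‖ + lf0*|σ - σ'|) ≤ c → c ≤ δ →
      hausdorffDist (T x σ) (T x' σ') ≤ c/μ := by
    intro x hx x' hx' σ hσ σ' hσ' c hc hcδ
    have hKnn : 0 ≤ (4/3) * (2*lg1*‖x - x'‖ + lf0*|σ - σ'|) := by positivity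
    have hcnn : 0 ≤ c := le_trans hKnn hc
    apply hausdorffDist_le_of_infDist (by positivity)
    · intro y hy
      have h1 := key x hx x' σ hσ σ' hσ' y hy
      have h2 : ρ⁻¹ * ‖y - prox x' σ' y‖ ≤ δ := le_trans (le_trans h1 hc) hcδ
      have h3 := hEB x' hx' σ' hσ' y (hTsub x σ hy) h2
      have h4 : μ * infDist y (T x' σ') ≤ c := le_trans h3 (le_trans h1 hc)
      rw [le_div_iff₀ hμ]
      linarith
    · intro y hy
      have h1 := key x' hx' x σ' hσ' σ hσ y hy
      have hrev : (4/3) * (2*lg1*‖x' - x‖ + lf0*|σ' - σ|)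
          = (4/3) * (2*lg1*‖x - x'‖ + lf0*|σ - σ'|) := by
        rw [norm_sub_rev, abs_sub_comm]
      rw [hrev] at h1
      have h2 : ρ⁻¹ * ‖y - prox x σ y‖ ≤ δ := le_trans (le_trans h1 hc) hcδ
      have h3 := hEB x hx σ hσ y (hTsub x' σ' hy) h2
      have h4 : μ * infDist y (T x σ) ≤ c := le_trans h3 (le_trans h1 hc)
      rw [le_div_iff₀ hμ]
      linarith
  -- the path construction
  have hσ₁' : σ₁ ∈ Icc (0:ℝ) σ₀ := ⟨hσ₁.1, le_trans hσ₁.2 (min_le_left _ _)⟩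
  have hσ₂' : σ₂ ∈ Icc (0:ℝ) σ₀ := ⟨hσ₂.1, le_trans hσ₂.2 (min_le_left _ _)⟩
  set d := ‖x₁ - x₂‖ with hd
  set e := |σ₁ - σ₂| with he
  set B := (4/3) * (2*lg1*d + lf0*e) with hB
  have hBnn : 0 ≤ B := by positivity
  set N : ℕ := Nat.ceil (B/δ) + 1 with hN
  have hNpos : 0 < (N:ℝ) := by positivity
  have hcδ : B/N ≤ δ := by
    rw [div_le_iff₀ hNpos]
    have h1 : B/δ ≤ (Nat.ceil (B/δ) : ℝ) := Nat.le_ceil _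
    have h2 : ((Nat.ceil (B/δ) : ℕ) : ℝ) + 1 = (N:ℝ) := by rw [hN]; push_cast; ring
    have h3 : B = (B/δ) * δ := by field_simp
    nlinarith [hδ]
  set t : ℕ → ℝ := fun i => ((min i N : ℕ) : ℝ)/N with ht
  have ht01 : ∀ i, t i ∈ Icc (0:ℝ) 1 := by
    intro i
    constructor
    · positivity
    · simp only [ht]
      exact (div_le_one hNpos).mpr (by exact_mod_cast min_le_right i N)
  have htstep : ∀ i, 0 ≤ t (i+1) - t i ∧ t (i+1) - t i ≤ 1/N := by
    intro i
    have h1 : (min i N : ℕ) ≤ min (i+1) N := by omega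
    have h2 : min (i+1) N ≤ min i N + 1 := by omega
    constructor
    · simp only [ht, sub_nonneg]
      gcongr
    · simp only [ht]
      rw [div_sub_div_same, div_le_div_iff₀ hNpos hNpos]
      have : ((min (i+1) N : ℕ):ℝ) ≤ ((min i N : ℕ):ℝ) + 1 := by exact_mod_cast h2
      nlinarith
  set u : ℕ → EuclideanSpace ℝ (Fin dx) := fun i => x₁ + t i • (x₂ - x₁) with hu
  set τ : ℕ → ℝ := fun i => σ₁ + t i * (σ₂ - σ₁) with hτ
  have ht0 : t 0 = 0 := by simp [ht]
  have htN : t N = 1 := by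
    simp only [ht]
    simp [min_self, div_self hNpos.ne']
  have hu0 : u 0 = x₁ := by simp [hu, ht0]
  have huN : u N = x₂ := by
    simp only [hu, htN, one_smul]
    abel
  have hτ0 : τ 0 = σ₁ := by simp [hτ, ht0]
  have hτN : τ N = σ₂ := by simp only [hτ, htN]; ring
  have hu_mem : ∀ i, u i ∈ X := by
    intro i
    have h := ht01 i
    have h2 := hXconv hx₁ hx₂ (sub_nonneg.mpr h.2) h.1 (by ring)
    convert h2 using 1
    simp only [hu]
    module
  have hτ_mem : ∀ i, τ i ∈ Icc (0:ℝ) σ₀ := by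
    intro i
    have h := ht01 i
    constructor
    · simp only [hτ]; nlinarith [hσ₁'.1, hσ₂'.1, h.1, h.2]
    · simp only [hτ]; nlinarith [hσ₁'.2, hσ₂'.2, h.1, h.2]
  have hud : ∀ i, ‖u i - u (i+1)‖ ≤ d/N := by
    intro i
    have h1 : u i - u (i+1) = (t i - t (i+1)) • (x₂ - x₁) := by
      simp only [hu]; module
    rw [h1, norm_smul, Real.norm_eq_abs]
    have habs : |t i - t (i+1)| ≤ 1/N := by
      rw [abs_sub_comm, abs_of_nonneg (htstep i).1]
      exact (htstep i).2
    have hnn : ‖x₂ - x₁‖ = d := by rw [hd, norm_sub_rev]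
    rw [hnn]
    have hdnn : 0 ≤ d := by rw [hd]; positivity
    calc |t i - t (i+1)| * d ≤ (1/N) * d := mul_le_mul_of_nonneg_right habs hdnn
      _ = d/N := by ring
  have hτd : ∀ i, |τ i - τ (i+1)| ≤ e/N := by
    intro i
    have h1 : τ i - τ (i+1) = (t i - t (i+1)) * (σ₁ - σ₂) * (-1) := by
      simp only [hτ]; ring
    rw [h1, abs_mul, abs_mul, abs_neg, abs_one, mul_one]
    have habs : |t i - t (i+1)| ≤ 1/N := by
      rw [abs_sub_comm, abs_of_nonneg (htstep i).1]
      exact (htstep i).2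
    have henn : 0 ≤ e := by rw [he]; positivity
    calc |t i - t (i+1)| * |σ₁ - σ₂| ≤ (1/N) * e :=
        mul_le_mul habs le_rfl (abs_nonneg _) (by positivity)
      _ = e/N := by ring
  -- per-step Hausdorff bound
  have hSstep : ∀ i, hausdorffDist (T (u i) (τ i)) (T (u (i+1)) (τ (i+1))) ≤ (B/N)/μ := by
    intro i
    refine hstep (u i) (hu_mem i) (u (i+1)) (hu_mem (i+1)) (τ i) (hτ_mem i)
      (τ (i+1)) (hτ_mem (i+1)) (B/N) ?_ hcδ
    have hx := hud i
    have hs := hτd i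
    have hBN : B/N = (4/3)*(2*lg1*(d/N) + lf0*(e/N)) := by
      rw [hB]; field_simp
    rw [hBN]
    have e1 : 2*lg1*‖u i - u (i+1)‖ ≤ 2*lg1*(d/N) := by nlinarith
    have e2 : lf0*|τ i - τ (i+1)| ≤ lf0*(e/N) := by nlinarith
    linarith
  -- chain the steps
  have hchain := hausdorff_chain (S := fun i => T (u i) (τ i))
    (fun i => hTne _ _) (fun i => hYbdd.subset (hTsub _ _)) hSstep N
  simp only [hu0, huN, hτ0, hτN] at hchain
  have hNB : (N:ℝ) * ((B/N)/μ) = B/μ := by field_simp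
  rw [hNB] at hchain
  have hfin : B/μ ≤ (3/μ) * (lg1 * d + lf0 * e) := by
    rw [hB, div_le_iff₀ hμ]
    have h1 : 0 ≤ lg1 * d := by positivity
    have h2 : 0 ≤ lf0 * e := by positivity
    field_simp
    nlinarith
  exact le_trans hchain hfin
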